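/- For regular families ℱ and 𝒢 of finite subsets of ℕ, the following are equivalent: (a) there exists an infinite M ⊆ ℕ such that ℱ(M) ⊆ 𝒢; (b) there exists an infinite M ⊆ ℕ such that ℱ ⊆ 𝒢(M⁻¹); (c) CB(ℱ) ≤ CB(𝒢). -/

import Mathlib

/-- Identify a finite subset of `ℕ` with a point of the Cantor space `ℕ → Bool`. -/
def toCantor (F : Finset ℕ) : ℕ → Bool := fun n => decide (n ∈ F)

/-- Hereditary: closed under subsets. -/
def Hereditary (G : Set (Finset ℕ)) : Prop := ∀ ⦃E F : Finset ℕ⦄, E ⊆ F → F ∈ G → E ∈ G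

/-- Spreading: closed under replacing elements by larger ones, keeping the
increasing order and the cardinality. -/
def Spreading (G : Set (Finset ℕ)) : Prop :=
  ∀ (E : Finset ℕ) (f : ℕ → ℕ), StrictMonoOn f ↑E → (∀ n ∈ E, n ≤ f n) →
    E ∈ G → E.image f ∈ G

/-- Regular: compact (in the Cantor topology), hereditary and spreading. -/
def IsRegularFam (G : Set (Finset ℕ)) : Prop :=
  IsCompact (toCantor '' G) ∧ Hereditary G ∧ Spreading G

/-- The Cantor–Bendixson derivative. -/
def cbDeriv {α : Type*} [TopologicalSpace α] (K : Set α) : Set α :=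
  {x | x ∈ K ∧ x ∈ closure (K \ {x})}

/-- Transfinite Cantor–Bendixson iterates. -/
noncomputable def cbIter {α : Type*} [TopologicalSpace α] (K : Set α) (ξ : Ordinal) : Set α :=
  Ordinal.limitRecOn ξ K (fun _ S => cbDeriv S)
    (fun o _ ih => ⋂ (ζ : Ordinal) (h : ζ < o), ih ζ h)


/-- For an infinite `M ⊆ ℕ` with increasing enumeration `(mₙ)`, the family
`ℱ(M) = {(mₙ)_{n ∈ E} : E ∈ ℱ}`. -/
def famImg (F : Set (Finset ℕ)) (M : Set ℕ) : Set (Finset ℕ) :=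
  (fun E : Finset ℕ => E.image (Nat.nth (· ∈ M))) '' F

/-- The family `𝒢(M⁻¹) = {E : (mₙ)_{n ∈ E} ∈ 𝒢}`. -/
def famPre (G : Set (Finset ℕ)) (M : Set ℕ) : Set (Finset ℕ) :=
  {E : Finset ℕ | E.image (Nat.nth (· ∈ M)) ∈ G}

theorem toCantor_injective : Function.Injective toCantor := by
  intro E E' h
  ext k
  have := congrFun h k
  simpa [toCantor] using this

@[simp] theorem cbIter_zero {α : Type*} [TopologicalSpace α] (K : Set α) : cbIter K 0 = K :=
  Ordinal.limitRecOn_zero ..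

@[simp] theorem cbIter_succ {α : Type*} [TopologicalSpace α] (K : Set α) (ξ : Ordinal) :
    cbIter K (Order.succ ξ) = cbDeriv (cbIter K ξ) :=
  Ordinal.limitRecOn_succ ..

theorem cbIter_limit {α : Type*} [TopologicalSpace α] (K : Set α) {ξ : Ordinal}
    (h : Order.IsSuccLimit ξ) : cbIter K ξ = ⋂ (ζ : Ordinal) (_ : ζ < ξ), cbIter K ζ :=
  Ordinal.limitRecOn_limit _ _ _ _ h

/-- Combinatorial derivative of a family. -/
def derFam (S : Set (Finset ℕ)) : Set (Finset ℕ) :=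
  {E | E ∈ S ∧ ∃ n, (∀ k ∈ E, k < n) ∧ insert n E ∈ S}

noncomputable def iterFam (H : Set (Finset ℕ)) (ξ : Ordinal) : Set (Finset ℕ) :=
  Ordinal.limitRecOn ξ H (fun _ S => derFam S)
    (fun o _ ih => ⋂ (ζ : Ordinal) (h : ζ < o), ih ζ h)

@[simp] theorem iterFam_zero (H : Set (Finset ℕ)) : iterFam H 0 = H :=
  Ordinal.limitRecOn_zero ..

@[simp] theorem iterFam_succ (H : Set (Finset ℕ)) (ξ : Ordinal) :
    iterFam H (Order.succ ξ) = derFam (iterFam H ξ) :=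
  Ordinal.limitRecOn_succ ..

theorem iterFam_limit (H : Set (Finset ℕ)) {ξ : Ordinal} (h : Order.IsSuccLimit ξ) :
    iterFam H ξ = ⋂ (ζ : Ordinal) (_ : ζ < ξ), iterFam H ζ :=
  Ordinal.limitRecOn_limit _ _ _ _ h

theorem derFam_subset (S : Set (Finset ℕ)) : derFam S ⊆ S := fun _ h => h.1

theorem iterFam_antitone (H : Set (Finset ℕ)) : ∀ {ζ ξ : Ordinal}, ζ ≤ ξ →
    iterFam H ξ ⊆ iterFam H ζ := by
  intro ζ ξ
  induction ξ using Ordinal.limitRecOn with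
  | zero => intro h; rw [nonpos_iff_eq_zero.mp h]
  | add_one ξ ih =>
    rw [Ordinal.add_one_eq_succ]
    intro h
    rcases Order.le_succ_iff_eq_or_le.mp h with rfl | h'
    · exact fun _ h => h
    · exact (iterFam_succ H ξ ▸ derFam_subset _).trans (ih h')
  | limit ξ hlim ih =>
    intro h
    rcases eq_or_lt_of_le h with rfl | h'
    · exact fun _ h => h
    · rw [iterFam_limit H hlim]
      exact Set.iInter₂_subset ζ h'


theorem spread_insert {S : Set (Finset ℕ)} (hS : Spreading S) {E : Finset ℕ} {n m : ℕ}
    (hEn : ∀ k ∈ E, k < n) (hnm : n ≤ m) (h : insert n E ∈ S) : insert m E ∈ S := by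
  set f : ℕ → ℕ := fun k => if k = n then m else k with hf
  have hid : E.image f = E := by
    have := Finset.image_congr (s := E) (f := f) (g := id)
      (fun k hk => by simp only [Finset.mem_coe] at hk; simp [hf, (hEn k hk).ne, id])
    rwa [Finset.image_id] at this
  have himg : (insert n E).image f = insert m E := by
    rw [Finset.image_insert, hid]
    congr 1
    simp [hf]
  have hmono : StrictMonoOn f ↑(insert n E) := by
    intro a ha b hb hab
    simp only [Finset.coe_insert, Set.mem_insert_iff, Finset.mem_coe] at ha hb
    rcases ha with han | ha
    · subst han
      rcases hb with hbn | hb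
      · exact absurd hbn.symm hab.ne
      · exact absurd (hEn b hb) (not_lt.mpr hab.le)
    · rcases hb with hbn | hb
      · subst hbn
        simp only [hf, if_pos rfl, if_neg (hEn a ha).ne]
        exact lt_of_lt_of_le (hEn a ha) hnm
      · simpa [hf, (hEn a ha).ne, (hEn b hb).ne] using hab
  have hle : ∀ k ∈ insert n E, k ≤ f k := by
    intro k hk
    by_cases hkn : k = n
    · subst hkn; simp [hf, hnm]
    · simp [hf, hkn]
  have := hS (insert n E) f hmono hle h
  rwa [himg] at this

theorem derFam_hereditary {S : Set (Finset ℕ)} (hh : Hereditary S) : Hereditary (derFam S) := by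
  intro E E' hsub h
  obtain ⟨hE', n, hn, hins⟩ := h
  refine ⟨hh hsub hE', n, fun k hk => hn k (hsub hk), hh (Finset.insert_subset_insert _ hsub) hins⟩

theorem derFam_spreading {S : Set (Finset ℕ)} (hs : Spreading S) : Spreading (derFam S) := by
  intro E f hmono hle hE
  obtain ⟨hES, n, hn, hins⟩ := hE
  refine ⟨hs E f hmono hle hES, ?_⟩
  set N : ℕ := max n ((E.image f).sup id + 1) with hN
  refine ⟨N, ?_, ?_⟩
  · intro k hk
    have : k ≤ (E.image f).sup id := Finset.le_sup (f := id) hk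
    exact lt_of_le_of_lt this (lt_of_lt_of_le (Nat.lt_succ_self _) (le_max_right _ _))
  · set g : ℕ → ℕ := fun k => if k = n then N else f k with hg
    have hid : E.image g = E.image f := by
      apply Finset.image_congr
      intro k hk
      simp only [Finset.mem_coe] at hk
      simp [hg, (hn k hk).ne]
    have himg : (insert n E).image g = insert N (E.image f) := by
      rw [Finset.image_insert, hid]
      congr 1
      simp [hg]
    have hmono' : StrictMonoOn g ↑(insert n E) := by
      intro a ha b hb hab
      simp only [Finset.coe_insert, Set.mem_insert_iff, Finset.mem_coe] at ha hb
      rcases ha with han | ha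
      · subst han
        rcases hb with hbn | hb
        · exact absurd hbn.symm hab.ne
        · exact absurd (hn b hb) (not_lt.mpr hab.le)
      · rcases hb with hbn | hb
        · subst hbn
          simp only [hg, if_neg (hn a ha).ne, if_pos rfl]
          have : f a ≤ (E.image f).sup id := Finset.le_sup (f := id) (Finset.mem_image_of_mem f ha)
          exact lt_of_le_of_lt this (lt_of_lt_of_le (Nat.lt_succ_self _) (le_max_right _ _))
        · simp only [hg, if_neg (hn a ha).ne, if_neg (hn b hb).ne]
          exact hmono ha hb hab
    have hle' : ∀ k ∈ insert n E, k ≤ g k := by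
      intro k hk
      rcases Finset.mem_insert.mp hk with rfl | hk
      · simp [hg, hN]
      · simp only [hg, if_neg (hn k hk).ne]
        exact hle k hk
    have := hs (insert n E) g hmono' hle' hins
    rwa [himg] at this

theorem cbDeriv_isClosed {α : Type*} [TopologicalSpace α] {K : Set α} (hK : IsClosed K) :
    IsClosed (cbDeriv K) := by
  rw [← isOpen_compl_iff]
  rw [isOpen_iff_forall_mem_open]
  intro x hx
  by_cases hxK : x ∈ K
  · have hxc : x ∉ closure (K \ {x}) := fun h => hx ⟨hxK, h⟩
    refine ⟨(closure (K \ {x}))ᶜ, ?_, isClosed_closure.isOpen_compl, hxc⟩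
    intro y hy hyd
    rcases eq_or_ne y x with rfl | hne
    · exact hy hyd.2
    · exact hy (subset_closure ⟨hyd.1, hne⟩)
  · exact ⟨Kᶜ, fun y hy hyd => hy hyd.1, hK.isOpen_compl, hxK⟩

theorem cbDeriv_mono {α : Type*} [TopologicalSpace α] {K L : Set α} (h : K ⊆ L) :
    cbDeriv K ⊆ cbDeriv L := fun x hx =>
  ⟨h hx.1, closure_mono (Set.diff_subset_diff_left h) hx.2⟩

/-- The key correspondence: for a regular family, the combinatorial derivative matches
the Cantor–Bendixson derivative. -/
theorem image_derFam {S : Set (Finset ℕ)} (hcpt : IsCompact (toCantor '' S))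
    (hh : Hereditary S) (hs : Spreading S) :
    toCantor '' derFam S = cbDeriv (toCantor '' S) := by
  have hclosed : IsClosed (toCantor '' S) := hcpt.isClosed
  apply Set.eq_of_subset_of_subset
  · rintro _ ⟨E, ⟨hES, n, hn, hins⟩, rfl⟩
    refine ⟨⟨E, hES, rfl⟩, ?_⟩
    -- the sequence toCantor (insert (n+j) E) tends to toCantor E
    have hmem : ∀ j : ℕ, insert (n + j) E ∈ S := fun j =>
      spread_insert hs hn (Nat.le_add_right n j) hins
    have htend : Filter.Tendsto (fun j => toCantor (insert (n + j) E)) Filter.atTop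
        (nhds (toCantor E)) := by
      rw [tendsto_pi_nhds]
      intro k
      apply Filter.Tendsto.congr' (f₁ := fun _ => toCantor E k)
      · rw [Filter.EventuallyEq, Filter.eventually_atTop]
        refine ⟨k + 1, fun j hj => ?_⟩
        have hkne : k ≠ n + j := by omega
        simp [toCantor, Finset.mem_insert, hkne]
      · exact tendsto_const_nhds
    refine mem_closure_of_tendsto htend ?_
    rw [Filter.eventually_atTop]
    refine ⟨0, fun j _ => ⟨⟨_, hmem j, rfl⟩, ?_⟩⟩
    simp only [Set.mem_singleton_iff]
    intro hEq
    have := toCantor_injective hEq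
    have hnj : n + j ∉ E := fun hk => by have := hn _ hk; omega
    exact hnj (this ▸ Finset.mem_insert_self _ _)
  · rintro x ⟨⟨E, hES, rfl⟩, hxc⟩
    refine ⟨E, ⟨hES, ?_⟩, rfl⟩
    set N : ℕ := E.sup id + 1 with hN
    have hEN : ∀ k ∈ E, k < N := fun k hk =>
      lt_of_le_of_lt (Finset.le_sup (f := id) hk) (Nat.lt_succ_self _)
    -- pick a nearby point in the family
    have hU : IsOpen {y : ℕ → Bool | ∀ k ∈ Finset.range N, y k = toCantor E k} := by
      have : {y : ℕ → Bool | ∀ k ∈ Finset.range N, y k = toCantor E k} =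
          ⋂ k ∈ Finset.range N, {y : ℕ → Bool | y k = toCantor E k} := by
        ext y; simp
      rw [this]
      apply isOpen_biInter_finset
      intro k _
      have : {y : ℕ → Bool | y k = toCantor E k} =
          (fun y : ℕ → Bool => y k) ⁻¹' ({toCantor E k} : Set Bool) := rfl
      rw [this]
      exact (continuous_apply k).isOpen_preimage _ (isOpen_discrete _)
    have hxU : toCantor E ∈ {y : ℕ → Bool | ∀ k ∈ Finset.range N, y k = toCantor E k} :=
      fun _ _ => rfl
    obtain ⟨y, hy1, hy2⟩ := mem_closure_iff.mp hxc _ hU hxU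
    obtain ⟨⟨E', hE'S, rfl⟩, hyne⟩ := hy2
    simp only [Set.mem_singleton_iff] at hyne
    have hEE' : E' ≠ E := fun h => hyne (h ▸ rfl)
    have hagree : ∀ k, k < N → (k ∈ E' ↔ k ∈ E) := by
      intro k hk
      have := hy1 k (Finset.mem_range.mpr hk)
      simpa [toCantor] using this
    have hsub : E ⊆ E' := fun k hk => (hagree k (hEN k hk)).mpr hk
    obtain ⟨n, hnE', hnE⟩ := Finset.exists_of_ssubset (lt_of_le_of_ne hsub (Ne.symm hEE'))
    have hnN : N ≤ n := by
      by_contra hlt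
      exact hnE ((hagree n (lt_of_not_ge hlt)).mp hnE')
    refine ⟨n, fun k hk => lt_of_lt_of_le (hEN k hk) hnN, ?_⟩
    exact hh (Finset.insert_subset hnE' hsub) hE'S

theorem iterFam_master {H : Set (Finset ℕ)} (hH : IsRegularFam H) (ξ : Ordinal) :
    IsRegularFam (iterFam H ξ) ∧ toCantor '' iterFam H ξ = cbIter (toCantor '' H) ξ := by
  induction ξ using Ordinal.limitRecOn with
  | zero => simpa using hH
  | add_one ξ ih =>
    rw [Ordinal.add_one_eq_succ]
    obtain ⟨⟨hcpt, hh, hs⟩, himg⟩ := ih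
    have himg' : toCantor '' derFam (iterFam H ξ) = cbDeriv (cbIter (toCantor '' H) ξ) := by
      rw [image_derFam hcpt hh hs, himg]
    have hclosed : IsClosed (cbDeriv (cbIter (toCantor '' H) ξ)) := by
      apply cbDeriv_isClosed
      rw [← himg]
      exact hcpt.isClosed
    refine ⟨⟨?_, ?_, ?_⟩, ?_⟩
    · rw [iterFam_succ, himg']
      exact hclosed.isCompact
    · rw [iterFam_succ]; exact derFam_hereditary hh
    · rw [iterFam_succ]; exact derFam_spreading hs
    · rw [iterFam_succ, cbIter_succ, himg']
  | limit ξ hlim ih =>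
    have h0 : (0 : Ordinal) < ξ := hlim.pos
    have himg : toCantor '' iterFam H ξ = ⋂ (ζ : Ordinal) (_ : ζ < ξ), toCantor '' iterFam H ζ := by
      rw [iterFam_limit H hlim]
      apply Set.eq_of_subset_of_subset
      · exact Set.image_iInter₂_subset _ _
      · intro x hx
        simp only [Set.mem_iInter] at hx
        obtain ⟨E, hE0, rfl⟩ := hx 0 h0
        refine ⟨E, ?_, rfl⟩
        simp only [Set.mem_iInter]
        intro ζ hζ
        obtain ⟨E', hE', hEq⟩ := hx ζ hζ
        rwa [← toCantor_injective hEq]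
    have hiter : ∀ ζ, ζ < ξ → IsRegularFam (iterFam H ζ) := fun ζ hζ => (ih ζ hζ).1
    have himg2 : toCantor '' iterFam H ξ = cbIter (toCantor '' H) ξ := by
      rw [himg, cbIter_limit _ hlim]
      apply Set.eq_of_subset_of_subset
      · intro x hx
        simp only [Set.mem_iInter] at hx ⊢
        intro ζ hζ
        rw [← (ih ζ hζ).2]
        exact hx ζ hζ
      · intro x hx
        simp only [Set.mem_iInter] at hx ⊢
        intro ζ hζ
        rw [(ih ζ hζ).2]
        exact hx ζ hζ
    refine ⟨⟨?_, ?_, ?_⟩, himg2⟩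
    · rw [himg]
      have : IsClosed (⋂ (ζ : Ordinal) (_ : ζ < ξ), toCantor '' iterFam H ζ) := by
        apply isClosed_iInter
        intro ζ
        apply isClosed_iInter
        intro hζ
        exact (hiter ζ hζ).1.isClosed
      exact this.isCompact
    · rw [iterFam_limit H hlim]
      intro E E' hsub h
      simp only [Set.mem_iInter] at h ⊢
      exact fun ζ hζ => (hiter ζ hζ).2.1 hsub (h ζ hζ)
    · rw [iterFam_limit H hlim]
      intro E f hmono hle h
      simp only [Set.mem_iInter] at h ⊢
      exact fun ζ hζ => (hiter ζ hζ).2.2 E f hmono hle (h ζ hζ)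

theorem iterFam_regular {H : Set (Finset ℕ)} (hH : IsRegularFam H) (ξ : Ordinal) :
    IsRegularFam (iterFam H ξ) := (iterFam_master hH ξ).1

theorem iterFam_image {H : Set (Finset ℕ)} (hH : IsRegularFam H) (ξ : Ordinal) :
    toCantor '' iterFam H ξ = cbIter (toCantor '' H) ξ := (iterFam_master hH ξ).2

/-- The "extension" relation on finite sets, relative to a family `H`. -/
def extRel (H : Set (Finset ℕ)) (A B : Finset ℕ) : Prop := B ⊂ A ∧ A ∈ H

theorem extRel_wf {H : Set (Finset ℕ)} (hcpt : IsCompact (toCantor '' H)) :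
    WellFounded (extRel H) := by
  classical
  haveI : IsIrrefl (Finset ℕ) (extRel H) := ⟨fun a h => ssubset_irrefl a h.1⟩
  haveI : IsTrans (Finset ℕ) (extRel H) := ⟨fun a b c hab hbc => ⟨hbc.1.trans hab.1, hab.2⟩⟩
  haveI : IsStrictOrder (Finset ℕ) (extRel H) := ⟨⟩
  by_contra hwf
  rw [RelEmbedding.wellFounded_iff_isEmpty, not_isEmpty_iff] at hwf
  obtain ⟨g⟩ := hwf
  set a : ℕ → Finset ℕ := fun n => g n with ha
  have hrel : ∀ n, extRel H (a (n + 1)) (a n) := fun n =>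
    g.map_rel_iff.mpr (Nat.lt_succ_self n)
  have hmono : Monotone a := monotone_nat_of_le_succ fun n =>
    Finset.le_iff_subset.mpr (hrel n).1.subset
  have hcard : StrictMono fun n => (a n).card :=
    strictMono_nat_of_lt_succ fun n => Finset.card_lt_card (hrel n).1
  set x : ℕ → Bool := fun k => decide (∃ n, k ∈ a n) with hx
  have hxtrue : ∀ k, (∃ n, k ∈ a n) → x k = true := by
    intro k hk; simp only [hx, decide_eq_true_eq]; exact hk
  have hxfalse : ∀ k, ¬(∃ n, k ∈ a n) → x k = false := by
    intro k hk; simp only [hx, decide_eq_false_iff_not]; exact hk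
  have htend : Filter.Tendsto (fun j => toCantor (a (j + 1))) Filter.atTop (nhds x) := by
    rw [tendsto_pi_nhds]
    intro k
    apply Filter.Tendsto.congr' (f₁ := fun _ => x k)
    · rw [Filter.EventuallyEq, Filter.eventually_atTop]
      by_cases h : ∃ n, k ∈ a n
      · obtain ⟨n, hn⟩ := h
        refine ⟨n, fun j hj => ?_⟩
        have h2 : k ∈ a (j + 1) := hmono (hj.trans (Nat.le_succ j)) hn
        rw [hxtrue k ⟨n, hn⟩]
        simp [toCantor, h2]
      · refine ⟨0, fun j _ => ?_⟩
        have h2 : k ∉ a (j + 1) := fun hk => h ⟨j + 1, hk⟩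
        rw [hxfalse k h]
        simp [toCantor, h2]
    · exact tendsto_const_nhds
  have hxmem : x ∈ toCantor '' H := by
    have hcl : IsClosed (toCantor '' H) := hcpt.isClosed
    refine hcl.mem_of_tendsto htend ?_
    rw [Filter.eventually_atTop]
    exact ⟨0, fun j _ => ⟨a (j + 1), (hrel j).2, rfl⟩⟩
  obtain ⟨E, _, hEx⟩ := hxmem
  have hsub : ∀ n, a n ⊆ E := by
    intro n k hk
    have h1 : x k = true := hxtrue k ⟨n, hk⟩
    rw [← hEx] at h1
    simpa [toCantor] using h1
  have h1 : E.card + 1 ≤ (a (E.card + 1)).card := hcard.le_apply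
  have h2 : (a (E.card + 1)).card ≤ E.card := Finset.card_le_card (hsub _)
  omega

/-- Every regular family has an empty iterate. -/
theorem iterFam_scattered {H : Set (Finset ℕ)} (hH : IsRegularFam H) :
    ∃ ξ : Ordinal, iterFam H ξ = ∅ := by
  have hwf : WellFounded (extRel H) := extRel_wf hH.1
  set rk : Finset ℕ → Ordinal.{0} := fun E => (hwf.apply E).rank with hrk
  have hrk_lt : ∀ {A B : Finset ℕ}, extRel H A B → rk A < rk B := by
    intro A B h
    exact Acc.rank_lt_of_rel _ h
  have key : ∀ ξ : Ordinal, ∀ E : Finset ℕ, E ∈ iterFam H ξ → ξ ≤ Ordinal.lift.{_, 0} (rk E) := by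
    intro ξ
    induction ξ using Ordinal.limitRecOn with
    | zero => intro E _; exact zero_le
    | add_one ξ ih =>
      rw [Ordinal.add_one_eq_succ]
      intro E hE
      rw [iterFam_succ] at hE
      obtain ⟨hE1, n, hn, hins⟩ := hE
      have hmem : insert n E ∈ H := by
        have := iterFam_antitone H (zero_le (a := ξ)) hins
        rwa [iterFam_zero] at this
      have h1 : ξ ≤ Ordinal.lift.{_, 0} (rk (insert n E)) := ih _ hins
      have h2 : rk (insert n E) < rk E := by
        apply hrk_lt
        refine ⟨Finset.ssubset_insert fun hk => ?_, hmem⟩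
        exact lt_irrefl n (hn n hk)
      rw [Order.succ_le_iff]
      exact lt_of_le_of_lt h1 (Ordinal.lift_lt.mpr h2)
    | limit ξ hlim ih =>
      intro E hE
      rw [iterFam_limit H hlim] at hE
      simp only [Set.mem_iInter] at hE
      refine le_of_forall_lt fun ζ hζ => ?_
      have hsucc : Order.succ ζ < ξ := hlim.succ_lt hζ
      have := ih _ hsucc E (hE _ hsucc)
      exact lt_of_lt_of_le (Order.lt_succ ζ) this
  refine ⟨Order.succ (Ordinal.lift.{_, 0} (rk ∅)), ?_⟩
  by_contra hne
  obtain ⟨E, hE⟩ := Set.nonempty_iff_ne_empty.mpr hne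
  have hher : Hereditary (iterFam H (Order.succ (Ordinal.lift.{_, 0} (rk ∅)))) :=
    (iterFam_regular hH _).2.1
  have h0 : (∅ : Finset ℕ) ∈ iterFam H (Order.succ (Ordinal.lift.{_, 0} (rk ∅))) :=
    hher (Finset.empty_subset E) hE
  have := key _ _ h0
  exact absurd this (not_le.mpr (Order.lt_succ _))

theorem exists_rho {H : Set (Finset ℕ)} (hH : IsRegularFam H) {E : Finset ℕ} (hE : E ∈ H) :
    ∃ ρ : Ordinal, E ∈ iterFam H ρ ∧ ∀ ξ, E ∈ iterFam H ξ → ξ ≤ ρ := by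
  set A : Set Ordinal := {ξ | E ∉ iterFam H ξ} with hA
  have hAne : A.Nonempty := by
    obtain ⟨ξ, hξ⟩ := iterFam_scattered hH
    exact ⟨ξ, by simp [hA, hξ]⟩
  set μ := sInf A with hμ
  have hμA : μ ∈ A := csInf_mem hAne
  have hlt : ∀ ζ, ζ < μ → E ∈ iterFam H ζ := by
    intro ζ hζ
    by_contra h
    exact absurd (csInf_le' (s := A) h) (not_le.mpr hζ)
  have hμ0 : μ ≠ 0 := by
    intro h
    apply hμA
    show E ∈ iterFam H μ
    rw [show μ = 0 from h, iterFam_zero]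
    exact hE
  rcases Ordinal.zero_or_succ_or_isSuccLimit μ with h | ⟨ρ, hρ⟩ | hlim
  · exact absurd h hμ0
  · refine ⟨ρ, hlt ρ (hρ ▸ Order.lt_succ ρ), fun ξ hξ => ?_⟩
    by_contra h
    have h2 : μ ≤ ξ := by rw [← hρ, Order.succ_le_iff]; exact not_le.mp h
    exact hμA (iterFam_antitone H h2 hξ)
  · exfalso
    apply hμA
    rw [iterFam_limit H hlim]
    simp only [Set.mem_iInter]
    exact fun ζ hζ => hlt ζ hζ

open Classical in
/-- The rank of a set inside a regular family: the largest `ξ` with `E ∈ iterFam H ξ`. -/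
noncomputable def rho (H : Set (Finset ℕ)) (E : Finset ℕ) : Ordinal :=
  if h : ∃ ρ : Ordinal, E ∈ iterFam H ρ ∧ ∀ ξ, E ∈ iterFam H ξ → ξ ≤ ρ then h.choose else 0

theorem rho_mem {H : Set (Finset ℕ)} (hH : IsRegularFam H) {E : Finset ℕ} (hE : E ∈ H) :
    E ∈ iterFam H (rho H E) := by
  rw [rho, dif_pos (exists_rho hH hE)]
  exact (exists_rho hH hE).choose_spec.1

theorem rho_max {H : Set (Finset ℕ)} (hH : IsRegularFam H) {E : Finset ℕ} {ξ : Ordinal}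
    (hξ : E ∈ iterFam H ξ) : ξ ≤ rho H E := by
  have hE : E ∈ H := by
    have := iterFam_antitone H (zero_le (a := ξ)) hξ
    rwa [iterFam_zero] at this
  rw [rho, dif_pos (exists_rho hH hE)]
  exact (exists_rho hH hE).choose_spec.2 ξ hξ

theorem rho_insert_lt {H : Set (Finset ℕ)} (hH : IsRegularFam H) {E : Finset ℕ} {n : ℕ}
    (hn : ∀ k ∈ E, k < n) (hins : insert n E ∈ H) : rho H (insert n E) < rho H E := by
  have h1 : insert n E ∈ iterFam H (rho H (insert n E)) := rho_mem hH hins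
  have hreg := iterFam_regular hH (rho H (insert n E))
  have hE : E ∈ iterFam H (rho H (insert n E)) :=
    hreg.2.1 (Finset.subset_insert n E) h1
  have h2 : E ∈ iterFam H (Order.succ (rho H (insert n E))) := by
    rw [iterFam_succ]
    exact ⟨hE, n, hn, h1⟩
  have := rho_max hH h2
  exact lt_of_lt_of_le (Order.lt_succ _) this

theorem threshold {H : Set (Finset ℕ)} (hH : IsRegularFam H) {t : Finset ℕ} {δ : Ordinal}
    (h : t ∈ iterFam H (Order.succ δ)) :
    ∃ m0 : ℕ, ∀ m, m0 ≤ m → insert m t ∈ iterFam H δ := by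
  rw [iterFam_succ] at h
  obtain ⟨ht, n, hn, hins⟩ := h
  exact ⟨n, fun m hm => spread_insert (iterFam_regular hH δ).2.2 hn hm hins⟩

section Phi

open Classical in
/-- The continuous injection of the Cantor space induced by an infinite subset `M ⊆ ℕ`. -/
noncomputable def phiMap (p : ℕ → Prop) : (ℕ → Bool) → (ℕ → Bool) :=
  fun x k => if p k then x (Nat.count p k) else false

theorem phiMap_continuous (p : ℕ → Prop) : Continuous (phiMap p) := by
  classical
  apply continuous_pi
  intro k
  by_cases h : p k
  · simp only [phiMap, if_pos h]
    exact continuous_apply _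
  · simp only [phiMap, if_neg h]
    exact continuous_const

theorem phiMap_injective {p : ℕ → Prop} (hp : (setOf p).Infinite) :
    Function.Injective (phiMap p) := by
  classical
  intro x y h
  funext n
  have h1 := congrFun h (Nat.nth p n)
  have hmem : p (Nat.nth p n) := Nat.nth_mem_of_infinite hp n
  simpa [phiMap, if_pos hmem, Nat.count_nth_of_infinite hp] using h1

theorem phiMap_toCantor {p : ℕ → Prop} (hp : (setOf p).Infinite) (E : Finset ℕ) :
    phiMap p (toCantor E) = toCantor (E.image (Nat.nth p)) := by
  classical
  funext k
  by_cases h : p k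
  · simp only [phiMap, if_pos h, toCantor]
    congr 1
    apply propext
    constructor
    · intro hc
      exact Finset.mem_image.mpr ⟨_, hc, Nat.nth_count h⟩
    · intro hc
      obtain ⟨e, he, hek⟩ := Finset.mem_image.mp hc
      have : e = Nat.count p k := by
        have := Nat.count_nth_of_infinite hp e
        rw [hek] at this
        omega
      rwa [← this]
  · simp only [phiMap, if_neg h, toCantor]
    symm
    simp only [decide_eq_false_iff_not]
    intro hc
    obtain ⟨e, _, hek⟩ := Finset.mem_image.mp hc
    exact h (hek ▸ Nat.nth_mem_of_infinite hp e)

theorem phiMap_cbIter {α β : Type*} [TopologicalSpace α] [TopologicalSpace β]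
    {Φ : α → β} (hc : Continuous Φ) (hi : Function.Injective Φ) {K : Set α} {L : Set β}
    (h : Φ '' K ⊆ L) : ∀ ξ : Ordinal, Φ '' cbIter K ξ ⊆ cbIter L ξ := by
  intro ξ
  induction ξ using Ordinal.limitRecOn with
  | zero => simpa using h
  | add_one ξ ih =>
    rw [Ordinal.add_one_eq_succ]
    rw [cbIter_succ, cbIter_succ]
    rintro _ ⟨x, ⟨hxS, hxc⟩, rfl⟩
    refine ⟨ih ⟨x, hxS, rfl⟩, ?_⟩
    have h1 : Φ x ∈ closure (Φ '' (cbIter K ξ \ {x})) :=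
      image_closure_subset_closure_image hc ⟨x, hxc, rfl⟩
    refine closure_mono ?_ h1
    rw [Set.image_diff hi, Set.image_singleton]
    exact Set.diff_subset_diff_left (fun y hy => ih hy)
  | limit ξ hlim ih =>
    rw [cbIter_limit _ hlim, cbIter_limit _ hlim]
    rintro _ ⟨x, hx, rfl⟩
    simp only [Set.mem_iInter] at hx ⊢
    exact fun ζ hζ => ih ζ hζ ⟨x, hx ζ hζ, rfl⟩

end Phi

section Construction

universe u

theorem nth_range_strictMono {f : ℕ → ℕ} (hf : StrictMono f) (n : ℕ) :
    Nat.nth (· ∈ Set.range f) n = f n := by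
  classical
  have hc : Nat.count (· ∈ Set.range f) (f n) = n := by
    rw [Nat.count_eq_card_filter_range]
    have heq : Finset.filter (fun x => x ∈ Set.range f) (Finset.range (f n)) =
        (Finset.range n).image f := by
      ext k
      simp only [Finset.mem_filter, Finset.mem_range, Set.mem_range, Finset.mem_image]
      constructor
      · rintro ⟨hk, m, rfl⟩
        exact ⟨m, hf.lt_iff_lt.mp hk, rfl⟩
      · rintro ⟨m, hm, rfl⟩
        exact ⟨hf.lt_iff_lt.mpr hm, ⟨m, rfl⟩⟩
    rw [heq, Finset.card_image_of_injective _ hf.injective, Finset.card_range]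
  have h2 := Nat.nth_count (p := (· ∈ Set.range f)) (⟨n, rfl⟩ : f n ∈ Set.range f)
  rw [hc] at h2
  exact h2

open Classical in
noncomputable def stepFun (F G : Set (Finset ℕ)) (prev : ℕ → ℕ) (n : ℕ) : ℕ :=
  ((Finset.range n).sup prev) + 1 +
    ((Finset.range n).powerset.sup fun E =>
      if h : ∃ m0 : ℕ, ∀ m, m0 ≤ m → insert m (E.image prev) ∈ iterFam.{u} G (rho.{u} F (insert n E))
      then h.choose else 0)

theorem stepFun_gt (F G : Set (Finset ℕ)) (prev : ℕ → ℕ) (n : ℕ) {k : ℕ} (hk : k < n) :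
    prev k < stepFun.{u} F G prev n := by
  have h1 : prev k ≤ (Finset.range n).sup prev :=
    Finset.le_sup (Finset.mem_range.mpr hk)
  rw [stepFun]
  omega

open Classical in
theorem stepFun_spec (F G : Set (Finset ℕ)) (prev : ℕ → ℕ) (n : ℕ) {E : Finset ℕ}
    (hE : E ⊆ Finset.range n)
    (hex : ∃ m0 : ℕ, ∀ m, m0 ≤ m → insert m (E.image prev) ∈ iterFam.{u} G (rho.{u} F (insert n E))) :
    insert (stepFun.{u} F G prev n) (E.image prev) ∈ iterFam.{u} G (rho.{u} F (insert n E)) := by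
  refine hex.choose_spec _ ?_
  have h1 : (if h : ∃ m0 : ℕ, ∀ m, m0 ≤ m →
      insert m (E.image prev) ∈ iterFam.{u} G (rho.{u} F (insert n E)) then h.choose else 0) = hex.choose :=
    dif_pos hex
  have h2 := Finset.le_sup (f := fun E : Finset ℕ =>
      if h : ∃ m0 : ℕ, ∀ m, m0 ≤ m → insert m (E.image prev) ∈ iterFam.{u} G (rho.{u} F (insert n E))
      then h.choose else 0) (Finset.mem_powerset.mpr hE)
  have h3 : hex.choose ≤ (Finset.range n).powerset.sup (fun E : Finset ℕ =>
      if h : ∃ m0 : ℕ, ∀ m, m0 ≤ m →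
        insert m (E.image prev) ∈ iterFam.{u} G (rho.{u} F (insert n E))
      then h.choose else 0) := by
    rw [← h1]
    exact h2
  calc hex.choose ≤ _ := h3
    _ ≤ stepFun.{u} F G prev n := Nat.le_add_left _ _

noncomputable def prefFun (F G : Set (Finset ℕ)) : ℕ → ℕ → ℕ
  | 0 => fun _ => 0
  | n+1 => fun k => if k = n then stepFun.{u} F G (prefFun F G n) n else prefFun F G n k

noncomputable def mFun (F G : Set (Finset ℕ)) (n : ℕ) : ℕ := prefFun.{u} F G (n + 1) n

theorem mFun_eq (F G : Set (Finset ℕ)) (n : ℕ) :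
    mFun.{u} F G n = stepFun.{u} F G (prefFun.{u} F G n) n := by
  simp [mFun, prefFun]

theorem prefFun_eq (F G : Set (Finset ℕ)) : ∀ n k, k < n → prefFun.{u} F G n k = mFun.{u} F G k := by
  intro n
  induction n with
  | zero => intro k hk; omega
  | succ n ih =>
    intro k hk
    rcases Nat.lt_succ_iff_lt_or_eq.mp hk with h | rfl
    · have : k ≠ n := h.ne
      simp only [prefFun, if_neg this]
      exact ih k h
    · simp [mFun]

theorem image_prefFun (F G : Set (Finset ℕ)) {E : Finset ℕ} {n : ℕ} (hE : E ⊆ Finset.range n) :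
    E.image (prefFun.{u} F G n) = E.image (mFun.{u} F G) := by
  apply Finset.image_congr
  intro k hk
  simp only [Finset.mem_coe] at hk
  exact prefFun_eq F G n k (Finset.mem_range.mp (hE hk))

theorem mFun_strictMono (F G : Set (Finset ℕ)) : StrictMono (mFun.{u} F G) := by
  apply strictMono_nat_of_lt_succ
  intro n
  have h1 : mFun F G (n + 1) = stepFun F G (prefFun F G (n + 1)) (n + 1) := mFun_eq F G (n + 1)
  have h2 : prefFun F G (n + 1) n = mFun F G n := prefFun_eq F G (n + 1) n (Nat.lt_succ_self n)
  have := stepFun_gt F G (prefFun F G (n + 1)) (n + 1) (Nat.lt_succ_self n)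
  rw [h2] at this
  rw [h1]
  exact this

theorem mFun_invariant {F G : Set (Finset ℕ)} (hF : IsRegularFam F) (hG : IsRegularFam G)
    (hbase : (∅ : Finset ℕ) ∈ iterFam.{u} G (rho.{u} F ∅)) :
    ∀ E : Finset ℕ, E ∈ F → E.image (mFun.{u} F G) ∈ iterFam.{u} G (rho.{u} F E) := by
  intro E
  induction E using Finset.strongInduction with
  | _ E ih =>
    intro hE
    rcases Finset.eq_empty_or_nonempty E with rfl | hne
    · simpa using hbase
    · set n := E.max' hne with hn
      set E' := E.erase n with hE'
      have hins : insert n E' = E := Finset.insert_erase (E.max'_mem hne)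
      have hssub : E' ⊂ E := Finset.erase_ssubset (E.max'_mem hne)
      have hE'F : E' ∈ F := hF.2.1 hssub.subset hE
      have hE'n : ∀ k ∈ E', k < n := by
        intro k hk
        obtain ⟨hkne, hkE⟩ := Finset.mem_erase.mp hk
        exact lt_of_le_of_ne (Finset.le_max' E k hkE) hkne
      have hIH : E'.image (mFun F G) ∈ iterFam.{u} G (rho.{u} F E') := ih E' hssub hE'F
      have hlt : rho F E < rho F E' := by
        have := rho_insert_lt hF hE'n (hins ▸ hE)
        rwa [hins] at this
      have hsucc : E'.image (mFun F G) ∈ iterFam G (Order.succ (rho F E)) :=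
        iterFam_antitone G (Order.succ_le_iff.mpr hlt) hIH
      have hex0 : ∃ m0 : ℕ, ∀ m, m0 ≤ m →
          insert m (E'.image (mFun F G)) ∈ iterFam.{u} G (rho.{u} F E) := threshold hG hsucc
      have hE'range : E' ⊆ Finset.range n := fun k hk => Finset.mem_range.mpr (hE'n k hk)
      have himg : E'.image (prefFun F G n) = E'.image (mFun F G) := image_prefFun F G hE'range
      have hex : ∃ m0 : ℕ, ∀ m, m0 ≤ m →
          insert m (E'.image (prefFun F G n)) ∈ iterFam G (rho F (insert n E')) := by
        rw [himg, hins]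
        exact hex0
      have hstep := stepFun_spec F G (prefFun F G n) n hE'range hex
      rw [himg, hins, ← mFun_eq F G n] at hstep
      have hfinal : E.image (mFun F G) = insert (mFun F G n) (E'.image (mFun F G)) := by
        rw [← hins, Finset.image_insert]
      rwa [hfinal]

end Construction

/-- For regular families `ℱ, 𝒢`, the following are equivalent:
(a) `ℱ(M) ⊆ 𝒢` for some infinite `M`; (b) `ℱ ⊆ 𝒢(M⁻¹)` for some infinite `M`;
(c) `CB(ℱ) ≤ CB(𝒢)`. -/
theorem famImg_subset_iff_CB_le (F G : Set (Finset ℕ))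
    (hF : IsRegularFam F) (hG : IsRegularFam G) :
    ((∃ M : Set ℕ, M.Infinite ∧ famImg F M ⊆ G) ↔
        (∃ M : Set ℕ, M.Infinite ∧ F ⊆ famPre G M)) ∧
    ((∃ M : Set ℕ, M.Infinite ∧ F ⊆ famPre G M) ↔
        (∀ ξ : Ordinal, cbIter (toCantor '' G) ξ = ∅ → cbIter (toCantor '' F) ξ = ∅)) := by
  constructor
  · exact exists_congr fun M => and_congr_right fun _ => Set.image_subset_iff
  constructor
  · rintro ⟨M, hMinf, hsub⟩ ξ hGξ
    have hp : (setOf (· ∈ M)).Infinite := by exact hMinf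
    have hΦ : phiMap (· ∈ M) '' (toCantor '' F) ⊆ toCantor '' G := by
      rintro _ ⟨_, ⟨E, hE, rfl⟩, rfl⟩
      rw [phiMap_toCantor hp]
      exact ⟨_, hsub hE, rfl⟩
    have hsub2 := phiMap_cbIter (phiMap_continuous (· ∈ M)) (phiMap_injective hp) hΦ ξ
    rw [hGξ, Set.subset_empty_iff, Set.image_eq_empty] at hsub2
    exact hsub2
  · intro h
    by_cases hFne : F.Nonempty
    · obtain ⟨E0, hE0⟩ := hFne
      have hEmptyF : (∅ : Finset ℕ) ∈ F := hF.2.1 (Finset.empty_subset E0) hE0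
      have h1 : (∅ : Finset ℕ) ∈ iterFam F (rho F ∅) := rho_mem hF hEmptyF
      have h2 : cbIter (toCantor '' F) (rho F ∅) ≠ ∅ := by
        rw [← iterFam_image hF]
        intro hc
        rw [Set.image_eq_empty] at hc
        rw [hc] at h1
        exact h1
      have h3 : iterFam G (rho F ∅) ≠ ∅ := by
        intro hc
        apply h2
        apply h
        rw [← iterFam_image hG, hc, Set.image_empty]
      have hbase : (∅ : Finset ℕ) ∈ iterFam G (rho F ∅) := by
        obtain ⟨E1, hE1⟩ := Set.nonempty_iff_ne_empty.mpr h3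
        exact (iterFam_regular hG _).2.1 (Finset.empty_subset E1) hE1
      refine ⟨Set.range (mFun F G),
        Set.infinite_range_of_injective (mFun_strictMono F G).injective, ?_⟩
      intro E hE
      show E.image (Nat.nth (· ∈ Set.range (mFun F G))) ∈ G
      have himg : E.image (Nat.nth (· ∈ Set.range (mFun F G))) = E.image (mFun F G) :=
        Finset.image_congr fun k _ => nth_range_strictMono (mFun_strictMono F G) k
      rw [himg]
      have hinv := mFun_invariant hF hG hbase E hE
      have h0 : iterFam G (rho F E) ⊆ G := by
        have := iterFam_antitone G (zero_le (a := rho F E))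
        rwa [iterFam_zero] at this
      exact h0 hinv
    · rw [Set.not_nonempty_iff_eq_empty] at hFne
      exact ⟨Set.univ, Set.infinite_univ, by simp [hFne]⟩
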